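/- Let the layered state space be the complete binary tree of depth H, namely S_h = {0,1}^{h−1} for h ∈ [H], with action set A = {0,1}, and for each action sequence a = (a_1, …, a_H) ∈ {0,1}^H let π_a be the policy that plays a_h at the h-th state of the root-to-leaf path determined by a (the state (a_1, …, a_{h−1}) ∈ S_h) and plays 0 at every other state. Then the class Π = {π_a : a ∈ {0,1}^H} satisfies: (i) 𝔠(Π) = 2^H; and (ii) Π is a (K, D)-sunflower with K ≤ H + 1 and D = H, witnessed by Π_core = {π_0} ∪ {π_h : h ∈ [H]} (with π_0 identically 0 and π_h(s) = 1 iff s ∈ S_h) and petal sets S_{π_a} equal to the set of states on the path of a. Thus a (poly(H), poly(H))-sunflower can have spanning capacity 2^H. -/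
import Mathlib


/-- A deterministic MDP over a layered state space. -/
structure DetMDP (S : ℕ → Type) (A : Type) where
  start : S 0
  step : ∀ h : ℕ, S h → A → S (h + 1)

/-- The trajectory of a policy in a deterministic MDP. -/
def DetMDP.traj {S : ℕ → Type} {A : Type} (M : DetMDP S A) (π : ∀ h : ℕ, S h → A) :
    ∀ h : ℕ, S h
  | 0 => M.start
  | h + 1 => M.step h (M.traj π h) (π h (M.traj π h))

/-- Reachability of a state-action pair at layer `h` by the class `P` in `M`. -/
def Reachable {S : ℕ → Type} {A : Type} (M : DetMDP S A) (P : Set (∀ h : ℕ, S h → A))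
    (h : ℕ) (s : S h) (a : A) : Prop :=
  ∃ π ∈ P, M.traj π h = s ∧ π h s = a

/-- Cumulative reachability at layer `h`. -/
noncomputable def Creach {S : ℕ → Type} {A : Type} (M : DetMDP S A)
    (P : Set (∀ h : ℕ, S h → A)) (h : ℕ) : ℕ :=
  Set.ncard {p : S h × A | Reachable M P h p.1 p.2}

/-- Spanning capacity of `P` with horizon `H`. -/
noncomputable def spanCap (H : ℕ) (S : ℕ → Type) (A : Type)
    (P : Set (∀ h : ℕ, S h → A)) : ℕ :=
  sSup {n : ℕ | ∃ h < H, ∃ M : DetMDP S A, n = Creach M P h}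

/-- A partial trajectory from layer `h` to layer `h'` is given by states `σ i ∈ S i` and
actions `α i` for `h ≤ i ≤ h'`; it is consistent with the policy `π` if `π` takes action
`α i` on the state `σ i` for every `h ≤ i ≤ h'`. -/
def Consistent {S : ℕ → Type} {A : Type} (π : ∀ h : ℕ, S h → A)
    (σ : ∀ i : ℕ, S i) (α : ℕ → A) (h h' : ℕ) : Prop :=
  ∀ i : ℕ, h ≤ i → i ≤ h' → π i (σ i) = α i

/-- `π` is an `Sbar`-petal on the policy set `core` (for horizon `H`): every partial
trajectory from layer `h` to layer `h'` (with `h ≤ h' < H`, `0`-indexed) that is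
consistent with `π` is either consistent with some member of `core`, or visits a state of
`Sbar` at some layer `i` with `h < i ≤ h'`.  States are recorded as pairs `⟨i, s⟩` of a
layer and a state of that layer. -/
def IsPetal (H : ℕ) {S : ℕ → Type} {A : Type} (core : Set (∀ h : ℕ, S h → A))
    (Sbar : Set ((i : ℕ) × S i)) (π : ∀ h : ℕ, S h → A) : Prop :=
  ∀ h h' : ℕ, h ≤ h' → h' < H → ∀ (σ : ∀ i : ℕ, S i) (α : ℕ → A),
    Consistent π σ α h h' →
      (∃ π' ∈ core, Consistent π' σ α h h') ∨ (∃ i : ℕ, h < i ∧ i ≤ h' ∧ ⟨i, σ i⟩ ∈ Sbar)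

/-- The policy class `P` is a `(K, D)`-sunflower: there is a core of at most `K` policies
such that every `π ∈ P` is an `S_π`-petal on the core for some set `S_π` of at most `D`
states. -/
def IsSunflower (H : ℕ) {S : ℕ → Type} {A : Type} (K D : ℕ)
    (P : Set (∀ h : ℕ, S h → A)) : Prop :=
  ∃ core : Set (∀ h : ℕ, S h → A), core.Finite ∧ core.ncard ≤ K ∧
    ∀ π ∈ P, ∃ Sbar : Set ((i : ℕ) × S i), Sbar.Finite ∧ Sbar.ncard ≤ D ∧
      IsPetal H core Sbar π

/-- The binary-tree state space: layer `h` (`0`-indexed) consists of the bit strings of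
length `h`, i.e. `S_h = {0,1}^{h}` (paper: `S_h = {0,1}^{h-1}` with `1`-indexed layers). -/
abbrev TreeState (h : ℕ) : Type := Fin h → Bool

/-- For a bit sequence `a`, `treePolicy a` plays `a h` at the `h`-th state of the
root-to-leaf path determined by `a` (the state `(a_0, …, a_{h-1})`) and plays `0`
(`false`) at every other state. -/
def treePolicy (a : ℕ → Bool) : ∀ h : ℕ, TreeState h → Bool :=
  fun h s => if ∀ i : Fin h, s i = a i then a h else false

/-- The policy class `Π = {π_a : a ∈ {0,1}^H}` of path policies on the binary tree. -/
def treeClass : Set (∀ h : ℕ, TreeState h → Bool) :=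
  {π | ∃ a : ℕ → Bool, π = treePolicy a}

/-- The set of states on the root-to-leaf path of `a` (one state per layer `h < H`). -/
def pathSet (H : ℕ) (a : ℕ → Bool) : Set ((i : ℕ) × TreeState i) :=
  {q | q.1 < H ∧ ∀ i : Fin q.1, q.2 i = a i}

/-- The core policy set `{π_0} ∪ {π_h : h < H}`, where `π_0` is identically `0` and `π_h`
takes action `1` exactly on the states of layer `h`. -/
def treeCore (H : ℕ) : Set (∀ h : ℕ, TreeState h → Bool) :=
  insert (fun _ _ => false) {π | ∃ h < H, π = fun i _ => decide (i = h)}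

lemma treePolicy_congr {a a' : ℕ → Bool} {h : ℕ} (hag : ∀ i ≤ h, a i = a' i)
    (s : TreeState h) : treePolicy a h s = treePolicy a' h s := by
  unfold treePolicy
  by_cases hc : ∀ i : Fin h, s i = a i
  · have hc' : ∀ i : Fin h, s i = a' i := fun i => (hc i).trans (hag i i.isLt.le)
    rw [if_pos hc, if_pos hc', hag h le_rfl]
  · have hc' : ¬ ∀ i : Fin h, s i = a' i :=
      fun hc' => hc fun i => ((hc' i).trans (hag i i.isLt.le).symm)
    rw [if_neg hc, if_neg hc']

lemma traj_congr (M : DetMDP TreeState Bool) {a a' : ℕ → Bool} :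
    ∀ h, (∀ i < h, a i = a' i) →
      M.traj (treePolicy a) h = M.traj (treePolicy a') h
  | 0, _ => rfl
  | h + 1, hag => by
      have ih := traj_congr M h (fun i hi => hag i (hi.trans (Nat.lt_succ_self h)))
      show M.step h _ _ = M.step h _ _
      rw [ih, treePolicy_congr (fun i hi => hag i (Nat.lt_succ_of_le hi))]

lemma creach_le (M : DetMDP TreeState Bool) (h : ℕ) :
    Creach M treeClass h ≤ 2 ^ (h + 1) := by
  classical
  set g : (Fin (h + 1) → Bool) → TreeState h × Bool := fun b =>
    (M.traj (treePolicy (fun i => if hi : i < h + 1 then b ⟨i, hi⟩ else false)) h,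
     treePolicy (fun i => if hi : i < h + 1 then b ⟨i, hi⟩ else false) h
       (M.traj (treePolicy (fun i => if hi : i < h + 1 then b ⟨i, hi⟩ else false)) h))
    with hg
  have hsub : {p : TreeState h × Bool | Reachable M treeClass h p.1 p.2} ⊆ Set.range g := by
    rintro ⟨s, c⟩ ⟨π, ⟨a, rfl⟩, hs, hc⟩
    refine ⟨fun i => a i, ?_⟩
    have hag : ∀ i ≤ h, (fun j => if hj : j < h + 1 then a (⟨j, hj⟩ : Fin (h+1)) else false) i = a i := by
      intro i hi
      simp [Nat.lt_succ_of_le hi]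
    have htr : M.traj (treePolicy (fun j => if hj : j < h + 1 then a (⟨j, hj⟩ : Fin (h+1)) else false)) h
        = M.traj (treePolicy a) h :=
      traj_congr M h (fun i hi => hag i hi.le)
    simp only [hg]
    rw [htr, hs, treePolicy_congr hag, hc]
  calc Creach M treeClass h ≤ (Set.range g).ncard :=
        Set.ncard_le_ncard hsub (Set.finite_range g)
    _ = (g '' Set.univ).ncard := by rw [Set.image_univ]
    _ ≤ (Set.univ : Set (Fin (h+1) → Bool)).ncard := Set.ncard_image_le Set.finite_univ
    _ = 2 ^ (h + 1) := by
        simp [Set.ncard_univ, Nat.card_eq_fintype_card]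

def treeMDP : DetMDP TreeState Bool where
  start := Fin.elim0
  step := fun _ s b => Fin.snoc s b

lemma treeMDP_traj (a : ℕ → Bool) :
    ∀ h, treeMDP.traj (treePolicy a) h = fun i : Fin h => a i
  | 0 => funext fun i => i.elim0
  | h + 1 => by
      have ih := treeMDP_traj a h
      show (Fin.snoc (treeMDP.traj (treePolicy a) h)
          (treePolicy a h (treeMDP.traj (treePolicy a) h)) : Fin (h + 1) → Bool) = _
      rw [ih]
      have hp : treePolicy a h (fun i : Fin h => a i) = a h := by
        unfold treePolicy
        rw [if_pos (fun i => rfl)]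
      rw [hp]
      funext i
      refine Fin.lastCases ?_ ?_ i
      · simp
      · intro j; simp

lemma treeMDP_creach (h : ℕ) : Creach treeMDP treeClass h = 2 ^ (h + 1) := by
  classical
  have huniv : {p : TreeState h × Bool | Reachable treeMDP treeClass h p.1 p.2} = Set.univ := by
    ext ⟨s, c⟩
    simp only [Set.mem_setOf_eq, Set.mem_univ, iff_true]
    refine ⟨treePolicy (fun i => if hi : i < h then s ⟨i, hi⟩ else c),
      ⟨_, rfl⟩, ?_, ?_⟩
    · rw [treeMDP_traj]; funext i; simp [i.isLt]
    · unfold treePolicy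
      rw [if_pos (fun i => by simp [i.isLt])]
      simp
  unfold Creach
  rw [huniv]
  simp [Set.ncard_univ, Nat.card_eq_fintype_card, pow_succ]

lemma tree_isPetal (H : ℕ) (a : ℕ → Bool) :
    IsPetal H (treeCore H) (pathSet H a) (treePolicy a) := by
  intro h h' hhh' hh'H σ α hcons
  by_cases hmid : ∃ i, h < i ∧ i ≤ h' ∧ ∀ j : Fin i, σ i j = a j
  · obtain ⟨i, h1, h2, h3⟩ := hmid
    exact Or.inr ⟨i, h1, h2, ⟨lt_of_le_of_lt h2 hh'H, h3⟩⟩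
  · push_neg at hmid
    left
    have hoff : ∀ i, h < i → i ≤ h' → α i = false := by
      intro i h1 h2
      rw [← hcons i h1.le h2]
      unfold treePolicy
      obtain ⟨j, hj⟩ := hmid i h1 h2
      exact if_neg (fun hc => hj (hc j))
    cases hαh : α h with
    | false =>
        refine ⟨fun _ _ => false, Set.mem_insert _ _, ?_⟩
        intro i hi hi'
        rcases eq_or_lt_of_le hi with rfl | hlt
        · exact hαh.symm
        · exact (hoff i hlt hi').symm
    | true =>
        refine ⟨fun i _ => decide (i = h), Or.inr ⟨h, lt_of_le_of_lt hhh' hh'H, rfl⟩, ?_⟩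
        intro i hi hi'
        rcases eq_or_lt_of_le hi with rfl | hlt
        · simp [hαh]
        · simp [hoff i hlt hi', Nat.ne_of_gt hlt]

lemma pathSet_eq (H : ℕ) (a : ℕ → Bool) :
    pathSet H a
      = (fun h => (⟨h, fun i => a i⟩ : (i : ℕ) × TreeState i)) '' Set.Iio H := by
  ext q
  constructor
  · rintro ⟨hq1, hq2⟩
    refine ⟨q.1, hq1, ?_⟩
    exact Sigma.ext rfl (heq_of_eq (funext fun j => (hq2 j).symm))
  · rintro ⟨j, hj, rfl⟩
    exact ⟨hj, fun k => rfl⟩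

lemma treeCore_eq (H : ℕ) :
    treeCore H = insert (fun _ _ => false)
      ((fun h => (fun i _ => decide (i = h) : ∀ i, TreeState i → Bool)) '' Set.Iio H) := by
  unfold treeCore
  congr 1
  ext π
  simp only [Set.mem_setOf_eq, Set.mem_image, Set.mem_Iio]
  constructor
  · rintro ⟨h, hh, rfl⟩; exact ⟨h, hh, rfl⟩
  · rintro ⟨h, hh, rfl⟩; exact ⟨h, hh, rfl⟩

lemma ncard_Iio (H : ℕ) : (Set.Iio H).ncard = H := by
  rw [← Finset.coe_range, Set.ncard_coe_finset, Finset.card_range]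

/-- For the class `Π` of path policies on the complete binary tree of depth
`H`: (i) the spanning capacity is exactly `2^H`; and (ii) `Π` is a `(K, D)`-sunflower
with `K ≤ H + 1` and `D = H`, witnessed by the core `{π_0} ∪ {π_h : h ∈ [H]}` and the
petal sets `S_{π_a} =` (states on the path of `a`).  Thus a
`(poly(H), poly(H))`-sunflower can have spanning capacity `2^H`. -/
theorem tree_spanning_and_sunflower (H : ℕ) (hH : 1 ≤ H) :
    spanCap H TreeState Bool treeClass = 2 ^ H ∧
      (treeCore H).ncard ≤ H + 1 ∧
      (∀ a : ℕ → Bool,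
        (pathSet H a).Finite ∧ (pathSet H a).ncard ≤ H ∧
          IsPetal (S := TreeState) H (treeCore H) (pathSet H a) (treePolicy a)) ∧
      IsSunflower (S := TreeState) H (H + 1) H treeClass := by
  have hIio : (Set.Iio H).Finite := Set.finite_Iio H
  have hcoreFin : (treeCore H).Finite := by
    rw [treeCore_eq]
    exact ((hIio.image _).insert _)
  have hcoreCard : (treeCore H).ncard ≤ H + 1 := by
    rw [treeCore_eq]
    have h2 : ((fun h => (fun i _ => decide (i = h) :
        ∀ i : ℕ, TreeState i → Bool)) '' Set.Iio H).ncard ≤ H := by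
      calc _ ≤ (Set.Iio H).ncard := Set.ncard_image_le hIio
        _ = H := ncard_Iio H
    calc (insert (fun _ _ => false) ((fun h => (fun i _ => decide (i = h) :
            ∀ i : ℕ, TreeState i → Bool)) '' Set.Iio H)).ncard
        ≤ ((fun h => (fun i _ => decide (i = h) :
            ∀ i : ℕ, TreeState i → Bool)) '' Set.Iio H).ncard + 1 :=
          Set.ncard_insert_le _ _
      _ ≤ H + 1 := Nat.succ_le_succ h2
  have hpath : ∀ a : ℕ → Bool, (pathSet H a).Finite ∧ (pathSet H a).ncard ≤ H ∧
      IsPetal (S := TreeState) H (treeCore H) (pathSet H a) (treePolicy a) := by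
    intro a
    refine ⟨?_, ?_, tree_isPetal H a⟩
    · rw [pathSet_eq]; exact hIio.image _
    · rw [pathSet_eq]
      calc _ ≤ (Set.Iio H).ncard := Set.ncard_image_le hIio
        _ = H := ncard_Iio H
  refine ⟨?_, hcoreCard, hpath, treeCore H, hcoreFin, hcoreCard, ?_⟩
  · -- spanning capacity
    have hmem : (2 : ℕ) ^ H ∈ {n : ℕ | ∃ h < H, ∃ M : DetMDP TreeState Bool,
        n = Creach M treeClass h} := by
      refine ⟨H - 1, Nat.sub_lt hH one_pos, treeMDP, ?_⟩
      rw [treeMDP_creach, Nat.sub_add_cancel hH]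
    have hub : ∀ n ∈ {n : ℕ | ∃ h < H, ∃ M : DetMDP TreeState Bool,
        n = Creach M treeClass h}, n ≤ 2 ^ H := by
      rintro n ⟨h, hhH, M, rfl⟩
      calc Creach M treeClass h ≤ 2 ^ (h + 1) := creach_le M h
        _ ≤ 2 ^ H := Nat.pow_le_pow_right (by norm_num) hhH
    exact le_antisymm (csSup_le ⟨_, hmem⟩ hub) (le_csSup ⟨2 ^ H, hub⟩ hmem)
  · rintro π ⟨a, rfl⟩
    exact ⟨pathSet H a, (hpath a).1, (hpath a).2.1, (hpath a).2.2⟩
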